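/- Let R ⊆ R' be a finite inclusion of Noetherian integral domains. Then there exists an intermediate ring R ⊆ R'' ⊆ R' such that R → R'' is (finite and) flat and R'' → R' is birational, i.e. R'' and R' have the same fraction field. -/

import Mathlib

set_option autoImplicit false
set_option maxHeartbeats 1000000
set_option synthInstance.maxHeartbeats 400000

universe u v

noncomputable section

namespace Paper

/-! ### Heights -/

/-- The height of an ideal `p`: the supremum of lengths of chains of prime ideals
strictly below `p`. -/
noncomputable def idealHeight {R : Type*} [CommRing R] (p : Ideal R) : ℕ∞ :=
  Set.chainHeight {q : Ideal R | q.IsPrime ∧ q < p} (· < ·)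

/-- The relative height `ht (p / p₀)`: the supremum of lengths of chains of prime
ideals lying between `p₀` (inclusive) and `p` (exclusive). -/
noncomputable def relHeight {R : Type*} [CommRing R] (p₀ p : Ideal R) : ℕ∞ :=
  Set.chainHeight {q : Ideal R | q.IsPrime ∧ p₀ ≤ q ∧ q < p} (· < ·)

/-! ### Semilocal rings and completions -/

/-- A ring is semilocal if it has only finitely many maximal ideals. -/
def IsSemilocal (R : Type*) [CommRing R] : Prop :=
  {I : Ideal R | I.IsMaximal}.Finite

/-- `R^∧`: the completion of a ring with respect to its Jacobson radical. -/
abbrev jComp (R : Type u) [CommRing R] : Type u :=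
  AdicCompletion ((⊥ : Ideal R).jacobson) R

/-! ### The canonical map between completions induced by a finite extension -/

section CompletionMap

variable {R : Type u} {R' : Type v} [CommRing R] [CommRing R']

theorem pow_smul_le_comap (f : R →+* R') {I : Ideal R} {I' : Ideal R'}
    (hf : I.map f ≤ I') (n : ℕ) :
    (I ^ n • ⊤ : Ideal R) ≤ Ideal.comap f (I' ^ n • ⊤ : Ideal R') := by
  refine Submodule.smul_le.2 fun r hr x _ => ?_
  have hfr : f r ∈ I' ^ n := by
    have h1 : Ideal.map f (I ^ n) ≤ I' ^ n := by
      rw [Ideal.map_pow]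
      exact Ideal.pow_right_mono hf n
    exact h1 (Ideal.mem_map_of_mem f hr)
  have hx : f (r • x) = f r • f x := by
    simp only [smul_eq_mul, map_mul]
  simp only [Ideal.mem_comap, hx]
  exact Submodule.smul_mem_smul hfr Submodule.mem_top

/-- The map induced by `f : R →+* R'` on adic completions, provided `f` maps `I`
into `I'`. -/
def adicCompletionMap (f : R →+* R') (I : Ideal R) (I' : Ideal R')
    (hf : I.map f ≤ I') : AdicCompletion I R →+* AdicCompletion I' R' where
  toFun x := ⟨fun n => Ideal.quotientMap _ f (pow_smul_le_comap f hf n) (x.1 n),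
    fun {m n} hmn => by
      have key : ∀ y : R ⧸ (I ^ n • ⊤ : Ideal R),
          AdicCompletion.transitionMap I' R' hmn
              (Ideal.quotientMap _ f (pow_smul_le_comap f hf n) y) =
            Ideal.quotientMap _ f (pow_smul_le_comap f hf m)
              (AdicCompletion.transitionMap I R hmn y) :=
        fun y => Quotient.inductionOn' y fun s => rfl
      rw [key, x.2 hmn]⟩
  map_one' := Subtype.ext <| funext fun n =>
    map_one (Ideal.quotientMap _ f (pow_smul_le_comap f hf n))
  map_mul' x y := Subtype.ext <| funext fun n =>
    map_mul (Ideal.quotientMap _ f (pow_smul_le_comap f hf n)) (x.1 n) (y.1 n)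
  map_zero' := Subtype.ext <| funext fun n =>
    map_zero (Ideal.quotientMap _ f (pow_smul_le_comap f hf n))
  map_add' x y := Subtype.ext <| funext fun n =>
    map_add (Ideal.quotientMap _ f (pow_smul_le_comap f hf n)) (x.1 n) (y.1 n)

theorem jacobson_map_le [Algebra R R'] [Module.Finite R R'] :
    ((⊥ : Ideal R).jacobson).map (algebraMap R R') ≤ (⊥ : Ideal R').jacobson := by
  rw [Ideal.map_le_iff_le_comap]
  intro x hx
  rw [Ideal.mem_comap]
  refine Submodule.mem_sInf.2 ?_
  rintro m' ⟨-, hm'⟩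
  haveI := hm'
  have hmax : (Ideal.comap (algebraMap R R') m').IsMaximal :=
    Ideal.isMaximal_comap_of_isIntegral_of_isMaximal m'
  exact Submodule.mem_sInf.1 hx _ ⟨bot_le, hmax⟩

/-- The canonical map `R^∧ →+* R'^∧` between the Jacobson-adic completions induced
by a finite ring extension `R ⊆ R'`. -/
def jCompMap (R : Type u) (R' : Type v) [CommRing R] [CommRing R'] [Algebra R R']
    [Module.Finite R R'] : jComp R →+* jComp R' :=
  adicCompletionMap (algebraMap R R') _ _ jacobson_map_le

end CompletionMap

/-! ### FONSIs -/

/-- A formal obstruction to naive `(S₂)`-ification (FONSI) for a (semilocal) ring `R`: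
a prime `P` of `R^∧` such that `ht (P ∩ R) > 1` and there is a minimal prime
`P₀ ⊆ P` of `R^∧` with `ht (P/P₀) = 1`. -/
def IsFONSI (R : Type u) [CommRing R] (P : Ideal (jComp R)) : Prop :=
  P.IsPrime ∧ 1 < idealHeight (P.comap (algebraMap R (jComp R))) ∧
    ∃ P₀ ∈ minimalPrimes (jComp R), P₀ ≤ P ∧ relHeight P₀ P = 1

/-- The set `OS R` of FONSIs of a (semilocal) ring `R`. -/
def OS (R : Type u) [CommRing R] : Set (Ideal (jComp R)) :=
  {P | IsFONSI R P}

/-- `OS R = ∅` for a general (not necessarily semilocal) ring `R`, where `OS R` is the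
disjoint union of the `OS (R_𝔪)` over all maximal ideals `𝔪` of `R`. -/
def OSIsEmpty (R : Type u) [CommRing R] : Prop :=
  ∀ (m : Ideal R) (_ : m.IsMaximal), OS (Localization.AtPrime m) = ∅

/-! ### Depth and Serre's conditions -/

/-- The depth of a module `M` over a local ring `A`: the supremum of the lengths of
regular sequences on `M` consisting of elements of the maximal ideal. -/
noncomputable def depth (A : Type*) [CommRing A] [IsLocalRing A]
    (M : Type*) [AddCommGroup M] [Module A M] : ℕ∞ :=
  sSup {n : ℕ∞ | ∃ rs : List A, (rs.length : ℕ∞) = n ∧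
    (∀ r ∈ rs, r ∈ IsLocalRing.maximalIdeal A) ∧ RingTheory.Sequence.IsRegular M rs}

/-- Serre's condition `(S_k)`: `depth A_p ≥ min (k, ht p)` for all primes `p`. -/
def SerreS (k : ℕ) (A : Type*) [CommRing A] : Prop :=
  ∀ (p : Ideal A) (_ : p.IsPrime),
    min (k : ℕ∞) (idealHeight p) ≤ depth (Localization.AtPrime p) (Localization.AtPrime p)

/-- Serre's condition `(S₂)` for a finite module `M` over a Noetherian ring `R`:
`depth M_p ≥ min (2, dim M_p)` for all primes `p` in the support of `M`. -/
def ModuleSerreS2 (R : Type u) (M : Type v) [CommRing R] [AddCommGroup M] [Module R M] :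
    Prop :=
  ∀ (p : Ideal R) (hp : p.IsPrime), (⟨p, hp⟩ : PrimeSpectrum R) ∈ Module.support R M →
    min (2 : WithBot ℕ∞)
        (ringKrullDim ((Localization.AtPrime p) ⧸
          Module.annihilator (Localization.AtPrime p) (LocalizedModule p.primeCompl M)))
      ≤ (depth (Localization.AtPrime p) (LocalizedModule p.primeCompl M) : WithBot ℕ∞)

/-! ### Localizations inside the fraction field; `nσ` and `σ` closures -/

/-- The localization of a subalgebra `A ⊆ Frac R` at a prime `p` of `R`, viewed as a
subalgebra of `Frac R`: all `x` with `t·x ∈ A` for some `t ∈ R ∖ p`. -/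
def locOfSubalgebra (R : Type u) [CommRing R] [IsDomain R]
    (A : Subalgebra R (FractionRing R)) (p : Ideal R) (hp : p.IsPrime) :
    Subalgebra R (FractionRing R) where
  carrier := {x | ∃ t : R, t ∉ p ∧ algebraMap R (FractionRing R) t * x ∈ A}
  mul_mem' := by
    rintro x y ⟨t, ht, hx⟩ ⟨s, hs, hy⟩
    refine ⟨t * s, fun h => (hp.mem_or_mem h).elim ht hs, ?_⟩
    have heq : algebraMap R (FractionRing R) (t * s) * (x * y) =
        (algebraMap R (FractionRing R) t * x) * (algebraMap R (FractionRing R) s * y) := by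
      rw [map_mul]; ring
    rw [heq]
    exact mul_mem hx hy
  one_mem' := ⟨1, fun h => hp.ne_top ((Ideal.eq_top_iff_one p).2 h), by
    simpa using Subalgebra.one_mem A⟩
  add_mem' := by
    rintro x y ⟨t, ht, hx⟩ ⟨s, hs, hy⟩
    refine ⟨t * s, fun h => (hp.mem_or_mem h).elim ht hs, ?_⟩
    have heq : algebraMap R (FractionRing R) (t * s) * (x + y) =
        algebraMap R (FractionRing R) s * (algebraMap R (FractionRing R) t * x) +
          algebraMap R (FractionRing R) t * (algebraMap R (FractionRing R) s * y) := by
      rw [map_mul]; ring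
    rw [heq]
    exact add_mem (mul_mem (Subalgebra.algebraMap_mem A s) hx)
      (mul_mem (Subalgebra.algebraMap_mem A t) hy)
  zero_mem' := ⟨1, fun h => hp.ne_top ((Ideal.eq_top_iff_one p).2 h), by
    simpa using Subalgebra.zero_mem A⟩
  algebraMap_mem' := fun r => ⟨1, fun h => hp.ne_top ((Ideal.eq_top_iff_one p).2 h), by
    simpa using Subalgebra.algebraMap_mem A r⟩

/-- The localization `R_p` of a domain `R` at a prime `p`, as a subalgebra of the
fraction field. -/
noncomputable def locSubR (R : Type u) [CommRing R] [IsDomain R] (p : Ideal R)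
    (hp : p.IsPrime) : Subalgebra R (FractionRing R) :=
  locOfSubalgebra R ⊥ p hp

/-- `R^{nσ} = ⋂ R_q`, the intersection over all height-one primes `q` of `R`, inside
the fraction field. -/
noncomputable def nsigma (R : Type u) [CommRing R] [IsDomain R] :
    Subalgebra R (FractionRing R) :=
  ⨅ q : {q : Ideal R // q.IsPrime ∧ idealHeight q = 1}, locSubR R q.1 q.2.1

/-- `R^σ = R^{nσ} ∩ R^ν`. -/
noncomputable def sigma (R : Type u) [CommRing R] [IsDomain R] :
    Subalgebra R (FractionRing R) :=
  nsigma R ⊓ integralClosure R (FractionRing R)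

/-- The localization `S_q` of a subalgebra `S ⊆ Frac R` at a prime `q` of `S`, as a
subalgebra of `Frac R`. -/
def locSub (R : Type u) [CommRing R] [IsDomain R] (S : Subalgebra R (FractionRing R))
    (q : Ideal S) (hq : q.IsPrime) : Subalgebra R (FractionRing R) where
  carrier := {x | ∃ t : S, t ∉ q ∧ (t : FractionRing R) * x ∈ S}
  mul_mem' := by
    rintro x y ⟨t, ht, hx⟩ ⟨s, hs, hy⟩
    refine ⟨t * s, fun h => (hq.mem_or_mem h).elim ht hs, ?_⟩
    have heq : ((t * s : S) : FractionRing R) * (x * y) =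
        ((t : FractionRing R) * x) * ((s : FractionRing R) * y) := by
      push_cast; ring
    rw [heq]
    exact mul_mem hx hy
  one_mem' := ⟨1, fun h => hq.ne_top ((Ideal.eq_top_iff_one q).2 h), by
    simpa using Subalgebra.one_mem S⟩
  add_mem' := by
    rintro x y ⟨t, ht, hx⟩ ⟨s, hs, hy⟩
    refine ⟨t * s, fun h => (hq.mem_or_mem h).elim ht hs, ?_⟩
    have heq : ((t * s : S) : FractionRing R) * (x + y) =
        (s : FractionRing R) * ((t : FractionRing R) * x) +
          (t : FractionRing R) * ((s : FractionRing R) * y) := by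
      push_cast; ring
    rw [heq]
    exact add_mem (mul_mem s.2 hx) (mul_mem t.2 hy)
  zero_mem' := ⟨1, fun h => hq.ne_top ((Ideal.eq_top_iff_one q).2 h), by
    simpa using Subalgebra.zero_mem S⟩
  algebraMap_mem' := fun r => ⟨1, fun h => hq.ne_top ((Ideal.eq_top_iff_one q).2 h), by
    simpa using Subalgebra.algebraMap_mem S r⟩

/-- `S^{nσ}` for a subalgebra `S` of the fraction field of `R`: the intersection of
the `S_q` over all height-one primes `q` of `S`. -/
noncomputable def nsigmaIn (R : Type u) [CommRing R] [IsDomain R]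
    (S : Subalgebra R (FractionRing R)) : Subalgebra R (FractionRing R) :=
  ⨅ q : {q : Ideal S // q.IsPrime ∧ idealHeight q = 1}, locSub R S q.1 q.2.1

/-- `S^σ = S^{nσ} ∩ S^ν` for a subalgebra `S` of the fraction field of `R`. -/
noncomputable def sigmaIn (R : Type u) [CommRing R] [IsDomain R]
    (S : Subalgebra R (FractionRing R)) : Subalgebra R (FractionRing R) :=
  nsigmaIn R S ⊓ (integralClosure S (FractionRing R)).restrictScalars R

/-- The canonical embedding of fraction fields induced by an injective map of
domains. -/
noncomputable def fracMap (R R' : Type*) [CommRing R] [CommRing R'] [IsDomain R]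
    [IsDomain R'] [Algebra R R'] (hinj : Function.Injective (algebraMap R R')) :
    FractionRing R →+* FractionRing R' :=
  IsFractionRing.lift (g := (algebraMap R' (FractionRing R')).comp (algebraMap R R'))
    ((IsFractionRing.injective R' (FractionRing R')).comp hinj)

/-! ### The ad hoc `(S₂)` condition -/

/-- The `(S₂)` condition of the paper for subalgebras of the normalization: every
nonzero principal ideal is a finite intersection of primary ideals whose radicals
are height-one primes. -/
def AdHocS2 (S : Type*) [CommRing S] : Prop :=
  ∀ a : S, a ≠ 0 → ∃ T : Finset (Ideal S),
    (∀ Q ∈ T, Q.IsPrimary ∧ idealHeight Q.radical = 1) ∧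
    Ideal.span {a} = T.inf id

/-! ### Nagata and semi-Nagata rings -/

/-- A Nagata ring: a Noetherian ring such that every finite algebra over it that is a
domain has finite normalization. -/
def IsNagataRing (R : Type u) [CommRing R] : Prop :=
  IsNoetherianRing R ∧
    ∀ (B : Type u) [CommRing B] [IsDomain B] [Algebra R B], Module.Finite R B →
      Module.Finite B (integralClosure B (FractionRing B))

/-- A semi-Nagata ring: a Noetherian ring such that every finite algebra over it that
is a domain admits a finite inclusion into an `(S₂)` domain. -/
def IsSemiNagata (R : Type u) [CommRing R] : Prop :=
  IsNoetherianRing R ∧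
    ∀ (B : Type u) [CommRing B] [IsDomain B] [Algebra R B], Module.Finite R B →
      ∃ (C : Type u) (_ : CommRing C) (_ : IsDomain C) (_ : Algebra B C),
        Function.Injective (algebraMap B C) ∧ Module.Finite B C ∧ SerreS 2 C


/-! ### Cohen–Macaulay, Gorenstein, regular, lci local rings -/

/-- A Cohen–Macaulay local ring: a Noetherian local ring whose depth equals its Krull
dimension. -/
def IsCMLocalRing (A : Type u) [CommRing A] [IsLocalRing A] : Prop :=
  IsNoetherianRing A ∧ (depth A A : WithBot ℕ∞) = ringKrullDim A

/-- A Cohen–Macaulay ring: all localizations at primes are Cohen–Macaulay local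
rings. -/
def IsCohenMacaulayRing (A : Type u) [CommRing A] : Prop :=
  ∀ (p : Ideal A) (_ : p.IsPrime), IsCMLocalRing (Localization.AtPrime p)

/-- A Gorenstein local ring: a Noetherian local ring admitting a regular sequence
`rs` in the maximal ideal such that the quotient is Artinian with one-dimensional
(i.e. nonzero principal) socle. -/
def IsGorensteinLocalRing (A : Type u) [CommRing A] [IsLocalRing A] : Prop :=
  IsNoetherianRing A ∧
    ∃ rs : List A, (∀ r ∈ rs, r ∈ IsLocalRing.maximalIdeal A) ∧
      RingTheory.Sequence.IsRegular A rs ∧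
      IsArtinianRing (A ⧸ Ideal.span {r | r ∈ rs}) ∧
      ∃ x : A, x ∉ Ideal.span {r | r ∈ rs} ∧
        Submodule.colon (Ideal.span {r | r ∈ rs}) (IsLocalRing.maximalIdeal A) =
          Ideal.span {r | r ∈ rs} ⊔ Ideal.span {x}

/-- A regular local ring: a Noetherian local ring whose maximal ideal is generated by
`dim A` elements. -/
def IsRegularLocal (A : Type u) [CommRing A] [IsLocalRing A] : Prop :=
  IsNoetherianRing A ∧ ∃ s : Finset A,
    Ideal.span (s : Set A) = IsLocalRing.maximalIdeal A ∧
    (s.card : WithBot ℕ∞) = ringKrullDim A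

/-- A local complete intersection (lci) local ring: a Noetherian local ring whose
completion is the quotient of a regular local ring by an ideal generated by a regular
sequence. -/
def IsLciLocalRing (A : Type u) [CommRing A] [IsLocalRing A] : Prop :=
  IsNoetherianRing A ∧
    ∃ (B : Type u) (_ : CommRing B) (_ : IsLocalRing B), IsRegularLocal B ∧
      ∃ φ : B →+* jComp A, Function.Surjective φ ∧
        ∃ rs : List B, RingTheory.Sequence.IsRegular B rs ∧
          RingHom.ker φ = Ideal.span {r | r ∈ rs}

/-! ### Formal fibers -/

/-- The fiber ring of `A → B` over a prime `q` of `A`: the localization of `B ⧸ qB` at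
the image of `A ∖ q`; it is isomorphic to `B ⊗_A κ(q)`. -/
abbrev FiberRing (A : Type u) (B : Type u) [CommRing A] [CommRing B] [Algebra A B]
    (q : Ideal A) [q.IsPrime] : Type u :=
  Localization (Submonoid.map (algebraMap A (B ⧸ Ideal.map (algebraMap A B) q))
    q.primeCompl)

/-- `R` has `(S₁)` formal fibers: for every prime `p` of `R`, all fibers of the
completion map `R_p → (R_p)^∧` satisfy `(S₁)`. -/
def HasS1FormalFibers (R : Type u) [CommRing R] : Prop :=
  ∀ (p : Ideal R) (_ : p.IsPrime)
    (q : Ideal (Localization.AtPrime p)) (_ : q.IsPrime),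
    SerreS 1 (FiberRing (Localization.AtPrime p) (jComp (Localization.AtPrime p)) q)

/-- All fibers of `A → B` are geometrically `P`: for every prime `q` of `A` and every
finite field extension `L` of the residue field `κ(q)`, every local ring of `B ⊗_A L`
at one of its primes satisfies `P`. -/
def GeomFibersP (P : (A : Type u) → [CommRing A] → [IsLocalRing A] → Prop)
    (A : Type u) (B : Type u) [CommRing A] [CommRing B] [Algebra A B] : Prop :=
  ∀ (q : Ideal A) (_ : q.IsPrime) (L : Type u) (_ : Field L) (_ : Algebra A L),
    RingHom.ker (algebraMap A L) = q →
    FiniteDimensional (Subfield.closure (Set.range (algebraMap A L))) L →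
    ∀ (M : Ideal (TensorProduct A B L)) (_ : M.IsPrime), P (Localization.AtPrime M)

/-- `R` is a `P`-ring: all formal fibers of `R` are geometrically `P`. -/
def IsPRing (P : (A : Type u) → [CommRing A] → [IsLocalRing A] → Prop)
    (R : Type u) [CommRing R] : Prop :=
  ∀ (p : Ideal R) (_ : p.IsPrime),
    GeomFibersP P (Localization.AtPrime p) (jComp (Localization.AtPrime p))

/-! ### Catenary rings -/

/-- A catenary ring: any two prime ideals `p ≤ q` are connected by saturated chains
of primes only of length `ht (q/p)`. -/
def IsCatenaryRing (A : Type u) [CommRing A] : Prop :=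
  ∀ (n : ℕ) (c : Fin (n + 1) → Ideal A), (∀ i, (c i).IsPrime) →
    (∀ i : Fin n, c i.castSucc < c i.succ) →
    (∀ i : Fin n, ∀ r : Ideal A, r.IsPrime → ¬(c i.castSucc < r ∧ r < c i.succ)) →
    (n : ℕ∞) = relHeight (c 0) (c (Fin.last n))

/-! ### Localizations of submodules inside a localized ambient module -/

/-- For a submodule `M₀` of an `R`-module `X`, the "localization at a prime `p` inside
`X`": all `x ∈ X` with `t • x ∈ M₀` for some `t ∉ p`. -/
def locSubmodule {R : Type u} [CommRing R] {X : Type v} [AddCommGroup X] [Module R X]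
    (M₀ : Submodule R X) (p : Ideal R) (hp : p.IsPrime) : Submodule R X where
  carrier := {x | ∃ t : R, t ∉ p ∧ t • x ∈ M₀}
  add_mem' := by
    rintro x y ⟨t, ht, hx⟩ ⟨s, hs, hy⟩
    refine ⟨t * s, fun h => (hp.mem_or_mem h).elim ht hs, ?_⟩
    have heq : (t * s) • (x + y) = s • (t • x) + t • (s • y) := by
      rw [smul_add]
      rw [← mul_smul, ← mul_smul, mul_comm s t]
    rw [heq]
    exact M₀.add_mem (M₀.smul_mem s hx) (M₀.smul_mem t hy)
  zero_mem' := ⟨1, fun h => hp.ne_top ((Ideal.eq_top_iff_one p).2 h), by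
    simp⟩
  smul_mem' := by
    rintro r x ⟨t, ht, hx⟩
    refine ⟨t, ht, ?_⟩
    have heq : t • (r • x) = r • (t • x) := smul_comm t r x
    rw [heq]
    exact M₀.smul_mem r hx

end Paper



section StatementOneAux

open Submodule Set

variable {R R' : Type u} [CommRing R] [CommRing R'] [IsDomain R] [IsDomain R']
  [Algebra R R']

theorem aux_smul_ne_zero (hinj : Function.Injective (algebraMap R R'))
    {a : R} {x : R'} (ha : a ≠ 0) (hx : x ≠ 0) : a • x ≠ 0 := by
  rw [Algebra.smul_def]
  refine mul_ne_zero (fun h => ha ?_) hx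
  exact hinj (by rw [h, map_zero])

theorem aux_reindex {m : ℕ} (w : Fin m → R') (hw : LinearIndependent R w)
    (hP : ∀ x : R', ∃ a : R, a ≠ 0 ∧ a • x ∈ span R (range w))
    (j : Fin m) (hj : w j = 1) :
    ∃ (n : ℕ) (v : Fin (n + 1) → R'), v 0 = 1 ∧ LinearIndependent R v ∧
      ∀ x : R', ∃ a : R, a ≠ 0 ∧ a • x ∈ span R (range v) := by
  obtain ⟨n, rfl⟩ : ∃ n, m = n + 1 := ⟨m - 1, (Nat.succ_pred_eq_of_pos j.pos).symm⟩
  refine ⟨n, w ∘ (Equiv.swap 0 j), ?_, hw.comp _ (Equiv.injective _), ?_⟩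
  · simp [Equiv.swap_apply_left, hj]
  · have hre : range (w ∘ (Equiv.swap 0 j)) = range w :=
      (Equiv.swap 0 j).surjective.range_comp w
    rw [hre]; exact hP

theorem aux_exists_fam (hinj : Function.Injective (algebraMap R R'))
    [IsNoetherianRing R] [Module.Finite R R'] :
    ∃ (n : ℕ) (v : Fin (n + 1) → R'), v 0 = 1 ∧ LinearIndependent R v ∧
      ∀ x : R', ∃ a : R, a ≠ 0 ∧ a • x ∈ span R (range v) := by
  classical
  obtain ⟨I, hI, hImax⟩ := exists_maximal_linearIndepOn R (id : R' → R')
  rw [Set.image_id] at hImax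
  have hP0 : ∀ x : R', ∃ a : R, a ≠ 0 ∧ a • x ∈ span R I := by
    intro x
    by_cases hx : x ∈ I
    · exact ⟨1, one_ne_zero, by simpa using subset_span hx⟩
    · exact hImax x hx
  have hIco : LinearIndependent R ((↑) : I → R') := hI
  have hIfin : I.Finite := hIco.set_finite_of_isNoetherian
  haveI := hIfin.fintype
  set w : Fin (Fintype.card I) → R' :=
    (fun x : I => (x : R')) ∘ (Fintype.equivFin I).symm with hw_def
  have hw : LinearIndependent R w := hIco.comp _ (Equiv.injective _)
  have hrange : range w = I := by
    rw [hw_def, (Fintype.equivFin I).symm.surjective.range_comp, Subtype.range_coe]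
  have hP : ∀ x : R', ∃ a : R, a ≠ 0 ∧ a • x ∈ span R (range w) := by
    rw [hrange]; exact hP0
  by_cases h1 : ∃ j, w j = 1
  · obtain ⟨j, hj⟩ := h1
    exact aux_reindex w hw hP j hj
  · obtain ⟨c, hc, hcmem⟩ := hP 1
    rw [mem_span_range_iff_exists_fun] at hcmem
    obtain ⟨d, hd⟩ := hcmem
    obtain ⟨j, hdj⟩ : ∃ j, d j ≠ 0 := by
      by_contra h
      push_neg at h
      apply aux_smul_ne_zero hinj hc (one_ne_zero (α := R'))
      rw [← hd]
      simp [h]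
    set u : Fin (Fintype.card I) → R' := Function.update w j 1 with hu_def
    have huj : u j = 1 := Function.update_self j 1 w
    have hune : ∀ i, i ≠ j → u i = w i := fun i hi => Function.update_of_ne hi 1 w
    have hu : LinearIndependent R u := by
      rw [Fintype.linearIndependent_iff]
      intro g hg
      have e1 : ∑ i, (c * g i) • u i = 0 := by
        have h2 := congrArg (fun z => c • z) hg
        simpa [Finset.smul_sum, smul_smul] using h2
      have e2 : ∑ i, (c * g i) • u i
          = (c * g j) • (1 : R') + ∑ i ∈ Finset.univ.erase j, (c * g i) • w i := by
        rw [← Finset.add_sum_erase _ _ (Finset.mem_univ j), huj]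
        congr 1
        exact Finset.sum_congr rfl fun i hi => by rw [hune i (Finset.mem_erase.1 hi).1]
      have e3 : (c * g j) • (1 : R') = ∑ i, (g j * d i) • w i := by
        rw [mul_comm c (g j), mul_smul, ← hd, Finset.smul_sum]
        exact Finset.sum_congr rfl fun i _ => smul_smul _ _ _
      have e4 : ∑ i, (g j * d i) • w i
          = (g j * d j) • w j + ∑ i ∈ Finset.univ.erase j, (g j * d i) • w i :=
        (Finset.add_sum_erase _ _ (Finset.mem_univ j)).symm
      have h0 : ∑ i, (if i = j then g j * d j else g j * d i + c * g i) • w i = 0 := by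
        calc ∑ i, (if i = j then g j * d j else g j * d i + c * g i) • w i
            = (g j * d j) • w j
              + ∑ i ∈ Finset.univ.erase j, (g j * d i + c * g i) • w i := by
              rw [← Finset.add_sum_erase _ _ (Finset.mem_univ j), if_pos rfl]
              congr 1
              exact Finset.sum_congr rfl fun i hi => by
                rw [if_neg (Finset.mem_erase.1 hi).1]
          _ = (∑ i, (g j * d i) • w i)
              + ∑ i ∈ Finset.univ.erase j, (c * g i) • w i := by
              rw [e4, add_assoc]
              congr 1
              rw [← Finset.sum_add_distrib]
              exact Finset.sum_congr rfl fun i _ => add_smul _ _ _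
          _ = ∑ i, (c * g i) • u i := by rw [e2, ← e3]
          _ = 0 := e1
      have hE := Fintype.linearIndependent_iff.1 hw _ h0
      have hgj : g j = 0 := by
        have h3 := hE j
        rw [if_pos rfl] at h3
        rcases mul_eq_zero.1 h3 with h | h
        · exact h
        · exact absurd h hdj
      intro i
      by_cases hij : i = j
      · rw [hij]; exact hgj
      · have h3 := hE i
        rw [if_neg hij, hgj, zero_mul, zero_add] at h3
        rcases mul_eq_zero.1 h3 with h | h
        · exact absurd h hc
        · exact h
    have hspanu : ∀ z ∈ span R (range w), d j • z ∈ span R (range u) := by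
      intro z hz
      induction hz using span_induction with
      | mem x hx =>
        obtain ⟨i, rfl⟩ := hx
        by_cases hij : i = j
        · subst hij
          have hsplit : ∑ k, d k • w k
              = d i • w i + ∑ k ∈ Finset.univ.erase i, d k • w k :=
            (Finset.add_sum_erase _ _ (Finset.mem_univ i)).symm
          rw [hsplit] at hd
          have hwj : d i • w i = c • u i - ∑ k ∈ Finset.univ.erase i, d k • u k := by
            rw [huj]
            have herase : ∑ k ∈ Finset.univ.erase i, d k • u k
                = ∑ k ∈ Finset.univ.erase i, d k • w k :=
              Finset.sum_congr rfl fun k hk => by rw [hune k (Finset.mem_erase.1 hk).1]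
            rw [herase, eq_sub_iff_add_eq, hd]
          rw [hwj]
          exact sub_mem (smul_mem _ _ (subset_span (mem_range_self i)))
            (sum_mem fun k _ => smul_mem _ _ (subset_span (mem_range_self k)))
        · rw [← hune i hij]
          exact smul_mem _ _ (subset_span (mem_range_self i))
      | zero => rw [smul_zero]; exact zero_mem _
      | add x y hx hy ihx ihy => rw [smul_add]; exact add_mem ihx ihy
      | smul a x hx ih => rw [smul_comm]; exact smul_mem _ _ ih
    have hPu : ∀ x : R', ∃ a : R, a ≠ 0 ∧ a • x ∈ span R (range u) := by
      intro x
      obtain ⟨a, ha, hmem⟩ := hP x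
      exact ⟨a * d j, mul_ne_zero ha hdj, by rw [mul_comm, mul_smul]; exact hspanu _ hmem⟩
    exact aux_reindex u hu hPu j huj

end StatementOneAux

open Paper in
/-- A finite inclusion of Noetherian domains `R ⊆ R'` factors as
`R ⊆ R'' ⊆ R'` with `R → R''` finite and flat and `R'' → R'` birational. -/
theorem exists_flat_birational_factorization
    (R R' : Type u) [CommRing R] [CommRing R'] [IsDomain R] [IsDomain R']
    [IsNoetherianRing R] [IsNoetherianRing R'] [Algebra R R']
    (hinj : Function.Injective (algebraMap R R')) [Module.Finite R R'] :
    ∃ R'' : Subalgebra R R', Module.Finite R R'' ∧ Module.Flat R R'' ∧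
      ∀ x : R', ∃ y s : R'', s ≠ 0 ∧ (s : R') * x = (y : R') := by
  classical
  obtain ⟨n, v, hv0, hvind, hvP⟩ := aux_exists_fam hinj
  choose r hr hrmem using fun p : Fin (n + 1) × Fin (n + 1) => hvP (v p.1 * v p.2)
  set b : R := ∏ p : Fin (n + 1) × Fin (n + 1), r p with hb_def
  have hb : b ≠ 0 := Finset.prod_ne_zero_iff.2 fun p _ => hr p
  have hbmem : ∀ p : Fin (n + 1) × Fin (n + 1),
      b • (v p.1 * v p.2) ∈ Submodule.span R (Set.range v) := by
    intro p
    have hfac : b = (∏ q ∈ Finset.univ.erase p, r q) * r p := by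
      rw [hb_def, mul_comm, Finset.mul_prod_erase _ _ (Finset.mem_univ p)]
    rw [hfac, mul_smul]
    exact Submodule.smul_mem _ _ (hrmem p)
  set f : Fin (n + 1) → R' := fun i => if i = 0 then 1 else b • v i with hf_def
  have hf0 : f 0 = 1 := if_pos rfl
  have hfne : ∀ i, i ≠ 0 → f i = b • v i := fun i hi => if_neg hi
  set M : Submodule R R' := Submodule.span R (Set.range f) with hM_def
  have h1M : (1 : R') ∈ M := hf0 ▸ Submodule.subset_span (Set.mem_range_self 0)
  have hbv : ∀ i, b • v i ∈ M := by
    intro i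
    by_cases hi : i = 0
    · rw [hi, hv0]
      exact M.smul_mem b h1M
    · rw [← hfne i hi]
      exact Submodule.subset_span (Set.mem_range_self i)
  have hbspan : ∀ z ∈ Submodule.span R (Set.range v), b • z ∈ M := by
    intro z hz
    induction hz using Submodule.span_induction with
    | mem x hx => obtain ⟨i, rfl⟩ := hx; exact hbv i
    | zero => rw [smul_zero]; exact M.zero_mem
    | add x y hx hy ihx ihy => rw [smul_add]; exact M.add_mem ihx ihy
    | smul a x hx ih => rw [smul_comm]; exact M.smul_mem a ih
  have hmulf : ∀ i j, f i * f j ∈ M := by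
    intro i j
    by_cases hi : i = 0
    · rw [hi, hf0, one_mul]; exact Submodule.subset_span (Set.mem_range_self j)
    · by_cases hj : j = 0
      · rw [hj, hf0, mul_one]; exact Submodule.subset_span (Set.mem_range_self i)
      · have hprod : f i * f j = b • (b • (v i * v j)) := by
          rw [hfne i hi, hfne j hj, smul_mul_assoc, mul_smul_comm]
        rw [hprod]
        exact hbspan _ (hbmem (i, j))
  have hmul : ∀ x y : R', x ∈ M → y ∈ M → x * y ∈ M := by
    intro x y hx hy
    refine Submodule.span_induction₂ (p := fun x y _ _ => x * y ∈ M)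
      ?_ ?_ ?_ ?_ ?_ ?_ ?_ hx hy
    · intro s t hs ht
      obtain ⟨i, rfl⟩ := hs; obtain ⟨j, rfl⟩ := ht
      exact hmulf i j
    · intro t ht; rw [zero_mul]; exact M.zero_mem
    · intro s hs; rw [mul_zero]; exact M.zero_mem
    · intro s t z hs ht hz ih1 ih2; rw [add_mul]; exact M.add_mem ih1 ih2
    · intro s t z hs ht hz ih1 ih2; rw [mul_add]; exact M.add_mem ih1 ih2
    · intro a s t hs ht ih; rw [smul_mul_assoc]; exact M.smul_mem a ih
    · intro a s t hs ht ih; rw [mul_smul_comm]; exact M.smul_mem a ih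
  have hfind : LinearIndependent R f := by
    rw [Fintype.linearIndependent_iff]
    intro g hg
    have h0 : ∑ i, (if i = 0 then g 0 else g i * b) • v i = 0 := by
      rw [← hg]
      refine Finset.sum_congr rfl fun i _ => ?_
      by_cases hi : i = 0
      · rw [hi, if_pos rfl, hf0, hv0]
      · rw [if_neg hi, hfne i hi]
        exact (smul_smul _ _ _).symm
    have hE := Fintype.linearIndependent_iff.1 hvind _ h0
    intro i
    by_cases hi : i = 0
    · rw [hi]
      have h3 := hE 0
      rwa [if_pos rfl] at h3
    · have h3 := hE i
      rw [if_neg hi] at h3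
      rcases mul_eq_zero.1 h3 with h | h
      · exact h
      · exact absurd h hb
  have hMfin : Module.Finite R M :=
    Module.Finite.iff_fg.2 (Submodule.fg_span (Set.finite_range f))
  haveI hMfree : Module.Free R M := Module.Free.of_basis (Module.Basis.span hfind)
  haveI hMflat : Module.Flat R M := inferInstance
  let R'' : Subalgebra R R' := M.toSubalgebra h1M hmul
  let e : M ≃ₗ[R] R'' :=
    { toFun := fun x => ⟨x.1, x.2⟩
      invFun := fun x => ⟨x.1, x.2⟩
      map_add' := fun _ _ => rfl
      map_smul' := fun _ _ => rfl
      left_inv := fun _ => rfl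
      right_inv := fun _ => rfl }
  refine ⟨R'', Module.Finite.equiv e, Module.Flat.of_linearEquiv e.symm, ?_⟩
  intro x
  obtain ⟨a, ha, haspan⟩ := hvP x
  have hmemy : (b * a) • x ∈ M := by rw [mul_smul]; exact hbspan _ haspan
  have hmems : algebraMap R R' (b * a) ∈ M := by
    rw [Algebra.algebraMap_eq_smul_one]
    exact M.smul_mem _ h1M
  refine ⟨⟨(b * a) • x, hmemy⟩, ⟨algebraMap R R' (b * a), hmems⟩, ?_, ?_⟩
  · intro h
    have h4 : algebraMap R R' (b * a) = 0 := congrArg Subtype.val h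
    exact mul_ne_zero hb ha (hinj (by rw [h4, map_zero]))
  · show algebraMap R R' (b * a) * x = (b * a) • x
    rw [Algebra.smul_def]
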